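/- Let k₁,…,k_d ∈ ℕ with ΔF_j(k_j) > 0 for all j, and let (u₁,…,u_d), (v₁,…,v_d) be such that u_j, v_j ∈ (F_j(k_j−1), F_j(k_j)) for every j ∈ {1,…,d}. For m ∈ {1,…,d} define Ċ_m^⊞(w₁,…,w_d) = ∑_{S ⊆ {1,…,d}} H(k_{S₁},…,k_{S_d}) · (−1)^{1−s_m}/ΔF_m(k_m) · ∏_{ℓ∉S, ℓ≠m} {(F_ℓ(k_ℓ) − w_ℓ)/ΔF_ℓ(k_ℓ)} · ∏_{ℓ∈S, ℓ≠m} {(w_ℓ − F_ℓ(k_ℓ−1))/ΔF_ℓ(k_ℓ)}, where s_m = 1 if m ∈ S and s_m = 0 otherwise, and k_{S_j} = k_j if j ∈ S, k_{S_j} = k_j − 1 otherwise. Then C^⊞(v₁,…,v_d) − C^⊞(u₁,…,u_d) = ∑_{m=1}^d (v_m − u_m) · Ċ_m^⊞(w_{m1},…,w_{md}), where w_{mj} = u_j if j < m and w_{mj} = v_j if j ≥ m. -/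

import Mathlib

open MeasureTheory Filter Topology

noncomputable section

/-- Generalized inverse `F⁻¹(u) = inf {x | F x ≥ u}` of a distribution function,
with the convention `F⁻¹ 0 = -1`. -/
def genInv (F : ℝ → ℝ) (u : ℝ) : ℝ :=
  if u = 0 then -1 else sInf {x : ℝ | u ≤ F x}

/-- Multilinear extension `F^⊞(x) = ∫₀¹ F (x + u) du` of a univariate distribution function. -/
def mlin1 (F : ℝ → ℝ) (x : ℝ) : ℝ := ∫ u in Set.Icc (0:ℝ) 1, F (x + u)

/-- Multilinear extension `H^⊞(x) = ∫_{[0,1]^d} H (x + u) du` of a `d`-variate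
distribution function. -/
def mlin (d : ℕ) (H : (Fin d → ℝ) → ℝ) (x : Fin d → ℝ) : ℝ :=
  ∫ u in Set.Icc (0 : Fin d → ℝ) 1, H (x + u)

/-- The multilinear extension copula `C^⊞(u) = H^⊞(F₁^⊞⁻¹(u₁),…,F_d^⊞⁻¹(u_d))`
of `H` with margins `F`. -/
def mlinCopula (d : ℕ) (H : (Fin d → ℝ) → ℝ) (F : Fin d → ℝ → ℝ) (u : Fin d → ℝ) : ℝ :=
  mlin d H (fun j => genInv (mlin1 (F j)) (u j))

/-- The partial derivative `Ċ_m^⊞` of the multilinear extension copula on the open cell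
indexed by `k = (k₁,…,k_d)`:
`Ċ_m^⊞(w) = ∑_{S} H(k_S) (−1)^{1−s_m}/ΔF_m(k_m) ∏_{ℓ∉S,ℓ≠m} (F_ℓ(k_ℓ)−w_ℓ)/ΔF_ℓ(k_ℓ)
∏_{ℓ∈S,ℓ≠m} (w_ℓ−F_ℓ(k_ℓ−1))/ΔF_ℓ(k_ℓ)`. -/
def Cdot (d : ℕ) (H : (Fin d → ℝ) → ℝ) (F : Fin d → ℝ → ℝ) (k : Fin d → ℕ)
    (m : Fin d) (w : Fin d → ℝ) : ℝ :=
  ∑ S : Finset (Fin d),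
    H (fun j => if j ∈ S then (k j : ℝ) else (k j : ℝ) - 1)
      * ((-1 : ℝ) ^ ((1 : ℕ) - if m ∈ S then 1 else 0)
          / (F m (k m) - F m ((k m : ℝ) - 1)))
      * (∏ ℓ ∈ Finset.univ.filter (fun ℓ => ℓ ∉ S ∧ ℓ ≠ m),
          (F ℓ (k ℓ) - w ℓ) / (F ℓ (k ℓ) - F ℓ ((k ℓ : ℝ) - 1)))
      * (∏ ℓ ∈ S.filter (fun ℓ => ℓ ≠ m),
          (w ℓ - F ℓ ((k ℓ : ℝ) - 1)) / (F ℓ (k ℓ) - F ℓ ((k ℓ : ℝ) - 1)))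

/-- key arithmetic: for `n : ℕ`, `a : ℤ`, `y ∈ [a, a+1)`, `n ≤ y ↔ n ≤ a`. -/
theorem nat_le_iff (n : ℕ) (a : ℤ) (y : ℝ) (h1 : (a : ℝ) ≤ y) (h2 : y < a + 1) :
    ((n : ℝ) ≤ y ↔ (n : ℝ) ≤ (a : ℝ)) := by
  constructor
  · intro h
    have : (n : ℝ) < ((a + 1 : ℤ) : ℝ) := by push_cast; linarith
    have : (n : ℤ) < a + 1 := by exact_mod_cast this
    exact_mod_cast Int.lt_add_one_iff.1 this
  · intro h; linarith

section Fstep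
variable {Ω : Type*} [MeasurableSpace Ω] (P : Measure Ω) [IsProbabilityMeasure P]
  {d : ℕ} (X : Ω → Fin d → ℝ)

/-- step property of the marginal cdf -/
theorem F_step (hNat : ∀ ω j, ∃ k : ℕ, X ω j = k) (F : Fin d → ℝ → ℝ)
    (hF : ∀ j x, F j x = (P {ω | X ω j ≤ x}).toReal)
    (j : Fin d) (a : ℤ) (y : ℝ) (h1 : (a : ℝ) ≤ y) (h2 : y < a + 1) :
    F j y = F j a := by
  rw [hF, hF]
  congr 1
  congr 1
  ext ω
  obtain ⟨n, hn⟩ := hNat ω j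
  simp only [Set.mem_setOf_eq, hn]
  exact nat_le_iff n a y h1 h2

theorem F_mono (F : Fin d → ℝ → ℝ)
    (hF : ∀ j x, F j x = (P {ω | X ω j ≤ x}).toReal) (j : Fin d) : Monotone (F j) := by
  intro x y hxy
  rw [hF, hF]
  exact ENNReal.toReal_mono (measure_ne_top _ _)
    (measure_mono fun ω h => le_trans h hxy)

theorem F_nonneg (F : Fin d → ℝ → ℝ)
    (hF : ∀ j x, F j x = (P {ω | X ω j ≤ x}).toReal) (j : Fin d) (x : ℝ) : 0 ≤ F j x := by
  rw [hF]; exact ENNReal.toReal_nonneg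

end Fstep

theorem mlin1_cell (G : ℝ → ℝ) (κ : ℝ)
    (hlow : ∀ y, κ - 1 ≤ y → y < κ → G y = G (κ - 1))
    (hhigh : ∀ y, κ ≤ y → y < κ + 1 → G y = G κ)
    (x : ℝ) (hx1 : κ - 1 ≤ x) (hx2 : x < κ) :
    mlin1 G x = G (κ - 1) + (x - (κ - 1)) * (G κ - G (κ - 1)) := by
  set c : ℝ := κ - x with hc
  have hc0 : 0 < c := by simp [hc]; linarith
  have hc1 : c ≤ 1 := by simp [hc]; linarith
  have heq : Set.EqOn (fun t => G (x + t))
      (fun t => G (κ - 1) + (Set.Icc c 1).indicator (fun _ => G κ - G (κ - 1)) t)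
      (Set.Icc (0:ℝ) 1) := by
    intro t ht
    rcases Set.mem_Icc.1 ht with ⟨ht0, ht1⟩
    by_cases h : c ≤ t
    · have : (Set.Icc c 1).indicator (fun _ => G κ - G (κ - 1)) t = G κ - G (κ - 1) :=
        Set.indicator_of_mem (Set.mem_Icc.2 ⟨h, ht1⟩) _
      simp only [this]
      rw [hhigh (x + t) (by linarith) (by linarith)]
      ring
    · have : (Set.Icc c 1).indicator (fun _ => G κ - G (κ - 1)) t = 0 :=
        Set.indicator_of_notMem (fun hmem => h (Set.mem_Icc.1 hmem).1) _
      simp only [this]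
      rw [hlow (x + t) (by linarith) (by linarith)]
      ring
  rw [mlin1, setIntegral_congr_fun measurableSet_Icc heq]
  have hfin : (volume (Set.Icc (0:ℝ) 1)) < ⊤ := by
    rw [Real.volume_Icc]; exact ENNReal.ofReal_lt_top
  have hint1 : IntegrableOn (fun _ : ℝ => G (κ - 1)) (Set.Icc (0:ℝ) 1) volume :=
    integrableOn_const hfin.ne enorm_ne_top
  have hint2 : IntegrableOn
      (fun t => (Set.Icc c 1).indicator (fun _ => G κ - G (κ - 1)) t)
      (Set.Icc (0:ℝ) 1) volume := by
    refine (IntegrableOn.indicator ?_ measurableSet_Icc)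
    exact integrableOn_const hfin.ne enorm_ne_top
  rw [integral_add hint1 hint2]
  rw [setIntegral_const]
  rw [setIntegral_indicator measurableSet_Icc]
  have hss : Set.Icc (0:ℝ) 1 ∩ Set.Icc c 1 = Set.Icc c 1 :=
    Set.inter_eq_self_of_subset_right (Set.Icc_subset_Icc (le_of_lt hc0) le_rfl)
  rw [hss, setIntegral_const, measureReal_def, measureReal_def, Real.volume_Icc, Real.volume_Icc,
    ENNReal.toReal_ofReal (by norm_num : (0:ℝ) ≤ 1 - 0),
    ENNReal.toReal_ofReal (by linarith : (0:ℝ) ≤ 1 - c)]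
  simp only [smul_eq_mul, hc]
  ring

theorem mlin1_mono (G : ℝ → ℝ) (hG : Monotone G) : Monotone (mlin1 G) := by
  intro x y hxy
  unfold mlin1
  refine setIntegral_mono_on ?_ ?_ measurableSet_Icc (fun t _ => hG (by linarith))
  · exact ((hG.comp (fun a b h => by simpa using add_le_add_left h x)).monotoneOn
      _).integrableOn_isCompact isCompact_Icc
  · exact ((hG.comp (fun a b h => by simpa using add_le_add_left h y)).monotoneOn
      _).integrableOn_isCompact isCompact_Icc

theorem genInv_cell (G : ℝ → ℝ) (hG : Monotone G) (κ : ℝ)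
    (hlow : ∀ y, κ - 1 ≤ y → y < κ → G y = G (κ - 1))
    (hhigh : ∀ y, κ ≤ y → y < κ + 1 → G y = G κ)
    (hpos : 0 ≤ G (κ - 1)) (w : ℝ) (hw : w ∈ Set.Ioo (G (κ - 1)) (G κ)) :
    genInv (mlin1 G) w = (κ - 1) + (w - G (κ - 1)) / (G κ - G (κ - 1)) := by
  obtain ⟨hw1, hw2⟩ := hw
  have hΔ : 0 < G κ - G (κ - 1) := by linarith
  set x' : ℝ := (κ - 1) + (w - G (κ - 1)) / (G κ - G (κ - 1)) with hx'
  have hr0 : 0 < (w - G (κ - 1)) / (G κ - G (κ - 1)) := div_pos (by linarith) hΔ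
  have hr1 : (w - G (κ - 1)) / (G κ - G (κ - 1)) < 1 := (div_lt_one hΔ).2 (by linarith)
  have hx'1 : κ - 1 < x' := by simp [hx']; linarith
  have hx'2 : x' < κ := by simp only [hx']; linarith
  have hval : mlin1 G x' = w := by
    rw [mlin1_cell G κ hlow hhigh x' (le_of_lt hx'1) hx'2]
    simp only [hx']
    field_simp
    ring
  have hne : w ≠ 0 := by intro h; rw [h] at hw1; linarith
  rw [genInv, if_neg hne]
  have hlt : ∀ x, x < x' → mlin1 G x < w := by
    intro x hx
    rcases lt_or_ge x (κ - 1) with h | h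
    · calc mlin1 G x ≤ mlin1 G (κ - 1) := mlin1_mono G hG (le_of_lt h)
        _ = G (κ - 1) := by
            rw [mlin1_cell G κ hlow hhigh (κ - 1) le_rfl (by linarith)]; ring
        _ < w := hw1
    · rw [mlin1_cell G κ hlow hhigh x h (lt_trans hx hx'2), ← hval,
        mlin1_cell G κ hlow hhigh x' (le_of_lt hx'1) hx'2]
      have := mul_lt_mul_of_pos_right (show x - (κ-1) < x' - (κ-1) by linarith) hΔ
      linarith
  have hmemx' : x' ∈ {x : ℝ | w ≤ mlin1 G x} := by
    simp only [Set.mem_setOf_eq, hval, le_refl]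
  have hlb : ∀ x ∈ {x : ℝ | w ≤ mlin1 G x}, x' ≤ x := by
    intro x hx
    simp only [Set.mem_setOf_eq] at hx
    by_contra hcon
    push_neg at hcon
    exact absurd hx (not_le.2 (hlt x hcon))
  apply le_antisymm
  · exact csInf_le ⟨x', hlb⟩ hmemx'
  · exact le_csInf ⟨x', hmemx'⟩ hlb

theorem mlin_cell (d : ℕ) (Hf : (Fin d → ℝ) → ℝ) (k : Fin d → ℕ)
    (hHstep : ∀ (a : Fin d → ℤ) (y : Fin d → ℝ),
      (∀ j, (a j : ℝ) ≤ y j ∧ y j < a j + 1) → Hf y = Hf (fun j => (a j : ℝ)))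
    (x : Fin d → ℝ) (hx : ∀ j, (k j : ℝ) - 1 < x j ∧ x j < k j) :
    mlin d Hf x = ∑ S : Finset (Fin d),
      Hf (fun j => if j ∈ S then (k j : ℝ) else (k j : ℝ) - 1)
        * ∏ j, (if j ∈ S then x j - ((k j : ℝ) - 1) else (k j : ℝ) - x j) := by
  classical
  set c : Fin d → ℝ := fun j => (k j : ℝ) - x j with hc
  have hc0 : ∀ j, 0 < c j := fun j => by simp [hc]; linarith [(hx j).2]
  have hc1 : ∀ j, c j < 1 := fun j => by simp [hc]; linarith [(hx j).1]
  set I : Finset (Fin d) → Fin d → Set ℝ :=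
    fun S j => if j ∈ S then Set.Icc (c j) 1 else Set.Ico 0 (c j) with hI
  have hImeas : ∀ S j, MeasurableSet (I S j) := by
    intro S j
    simp only [hI]
    split_ifs
    exacts [measurableSet_Icc, measurableSet_Ico]
  have hIsub : ∀ S j, I S j ⊆ Set.Icc (0:ℝ) 1 := by
    intro S j
    simp only [hI]
    split_ifs
    · exact Set.Icc_subset_Icc (le_of_lt (hc0 j)) le_rfl
    · exact (Set.Ico_subset_Icc_self).trans (Set.Icc_subset_Icc le_rfl (le_of_lt (hc1 j)))
  have hpw : Set.EqOn (fun u => Hf (x + u))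
      (fun u => ∑ S : Finset (Fin d),
        (Set.pi Set.univ (I S)).indicator
          (fun _ => Hf (fun j => if j ∈ S then (k j : ℝ) else (k j : ℝ) - 1)) u)
      (Set.Icc (0 : Fin d → ℝ) 1) := by
    intro u hu
    rw [Set.mem_Icc] at hu
    have hu0 : ∀ j, 0 ≤ u j := fun j => hu.1 j
    have hu1 : ∀ j, u j ≤ 1 := fun j => hu.2 j
    set T : Finset (Fin d) := Finset.univ.filter (fun j => c j ≤ u j) with hT
    have hmemT : ∀ j, j ∈ T ↔ c j ≤ u j := fun j => by simp [hT]
    have hLHS : Hf (x + u) = Hf (fun j => if j ∈ T then (k j : ℝ) else (k j : ℝ) - 1) := by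
      have := hHstep (fun j => if j ∈ T then (k j : ℤ) else (k j : ℤ) - 1) (x + u) ?_
      · rw [this]
        congr 1
        funext j
        split_ifs <;> push_cast <;> ring
      · intro j
        simp only [Pi.add_apply]
        by_cases hj : j ∈ T
        · have := (hmemT j).1 hj
          simp only [hj, if_pos]
          constructor
          · push_cast; simp only [hc] at this; linarith
          · push_cast; linarith [(hx j).2, hu1 j]
        · have : ¬ c j ≤ u j := fun h => hj ((hmemT j).2 h)
          push_neg at this
          simp only [hj, if_neg, not_false_iff]
          constructor
          · push_cast; linarith [(hx j).1, hu0 j]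
          · push_cast; simp only [hc] at this; linarith
    have hRHS : ∑ S : Finset (Fin d),
        (Set.pi Set.univ (I S)).indicator
          (fun _ => Hf (fun j => if j ∈ S then (k j : ℝ) else (k j : ℝ) - 1)) u
        = Hf (fun j => if j ∈ T then (k j : ℝ) else (k j : ℝ) - 1) := by
      rw [Finset.sum_eq_single T]
      · apply Set.indicator_of_mem
        rw [Set.mem_univ_pi]
        intro j
        simp only [hI]
        by_cases hj : j ∈ T
        · rw [if_pos hj]; exact Set.mem_Icc.2 ⟨(hmemT j).1 hj, hu1 j⟩
        · rw [if_neg hj]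
          refine Set.mem_Ico.2 ⟨hu0 j, ?_⟩
          by_contra hcon
          push_neg at hcon
          exact hj ((hmemT j).2 hcon)
      · intro S _ hST
        apply Set.indicator_of_notMem
        intro hmem
        rw [Set.mem_univ_pi] at hmem
        apply hST
        ext j
        have := hmem j
        simp only [hI] at this
        rw [hmemT]
        constructor
        · intro hj; rw [if_pos hj] at this; exact (Set.mem_Icc.1 this).1
        · intro hcu
          by_contra hj
          rw [if_neg hj] at this
          exact absurd (Set.mem_Ico.1 this).2 (not_lt.2 hcu)
      · intro h
        exact absurd (Finset.mem_univ T) h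
    simp only []
    rw [hLHS, hRHS]
  have hfin : volume (Set.Icc (0 : Fin d → ℝ) 1) < ⊤ := by
    rw [Real.volume_Icc_pi]
    exact ENNReal.prod_lt_top (fun j _ => ENNReal.ofReal_lt_top)
  rw [mlin, setIntegral_congr_fun measurableSet_Icc hpw]
  rw [integral_finset_sum]
  · refine Finset.sum_congr rfl fun S _ => ?_
    have hmeas : MeasurableSet (Set.pi Set.univ (I S)) :=
      MeasurableSet.univ_pi (hImeas S)
    rw [setIntegral_indicator hmeas]
    have hsub : Set.pi Set.univ (I S) ⊆ Set.Icc (0 : Fin d → ℝ) 1 := by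
      rw [← Set.pi_univ_Icc]
      exact Set.pi_mono fun j _ => hIsub S j
    rw [Set.inter_eq_self_of_subset_right hsub, setIntegral_const]
    rw [measureReal_def, MeasureTheory.volume_pi_pi]
    have : ∀ j, volume (I S j) = ENNReal.ofReal (if j ∈ S then x j - ((k j:ℝ) - 1) else (k j:ℝ) - x j) := by
      intro j
      simp only [hI]
      split_ifs
      · rw [Real.volume_Icc]; congr 1; simp [hc]; ring
      · rw [Real.volume_Ico]; congr 1; simp [hc]
    simp_rw [this]
    rw [ENNReal.toReal_prod]
    have hnn : ∀ j, 0 ≤ (if j ∈ S then x j - ((k j:ℝ) - 1) else (k j:ℝ) - x j) := by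
      intro j
      split_ifs
      · linarith [(hx j).1]
      · linarith [(hx j).2]
    simp_rw [fun j => ENNReal.toReal_ofReal (hnn j)]
    rw [smul_eq_mul, mul_comm]
  · intro S _
    refine (integrable_indicator_iff (MeasurableSet.univ_pi (hImeas S))).2 ?_
    refine integrableOn_const (ne_of_lt ?_) enorm_ne_top
    calc (volume.restrict (Set.Icc (0 : Fin d → ℝ) 1)) (Set.pi Set.univ (I S))
        ≤ volume (Set.pi Set.univ (I S)) := Measure.restrict_apply_le _ _
      _ ≤ volume (Set.Icc (0 : Fin d → ℝ) 1) := by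
          refine measure_mono ?_
          rw [← Set.pi_univ_Icc]
          exact Set.pi_mono fun j _ => hIsub S j
      _ < ⊤ := hfin

def Phi (d : ℕ) (H : (Fin d → ℝ) → ℝ) (F : Fin d → ℝ → ℝ) (k : Fin d → ℕ)
    (w : Fin d → ℝ) : ℝ :=
  ∑ S : Finset (Fin d),
    H (fun j => if j ∈ S then (k j : ℝ) else (k j : ℝ) - 1)
      * ∏ j, (if j ∈ S then (w j - F j ((k j : ℝ) - 1)) / (F j (k j) - F j ((k j : ℝ) - 1))
              else (F j (k j) - w j) / (F j (k j) - F j ((k j : ℝ) - 1)))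

theorem phi_update (d : ℕ) (H : (Fin d → ℝ) → ℝ) (F : Fin d → ℝ → ℝ) (k : Fin d → ℕ)
    (m : Fin d) (w : Fin d → ℝ) (a b : ℝ) :
    Phi d H F k (Function.update w m b) - Phi d H F k (Function.update w m a)
      = (b - a) * Cdot d H F k m w := by
  unfold Phi Cdot
  rw [← Finset.sum_sub_distrib, Finset.mul_sum]
  refine Finset.sum_congr rfl fun S _ => ?_
  rw [← mul_sub]
  set Δ : Fin d → ℝ := fun j => F j (k j) - F j ((k j : ℝ) - 1) with hΔ
  have key : ∀ c : ℝ, (∏ j, (if j ∈ S then (Function.update w m c j - F j ((k j : ℝ) - 1)) / Δ j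
              else (F j (k j) - Function.update w m c j) / Δ j))
      = (if m ∈ S then (c - F m ((k m : ℝ) - 1)) / Δ m else (F m (k m) - c) / Δ m)
        * ∏ j ∈ Finset.univ.erase m, (if j ∈ S then (w j - F j ((k j : ℝ) - 1)) / Δ j
              else (F j (k j) - w j) / Δ j) := by
    intro c
    rw [← Finset.mul_prod_erase Finset.univ _ (Finset.mem_univ m)]
    rw [Function.update_self]
    congr 1
    refine Finset.prod_congr rfl fun j hj => ?_
    rw [Function.update_of_ne (Finset.ne_of_mem_erase hj)]
  rw [key, key, ← sub_mul]
  have hR : (∏ j ∈ Finset.univ.erase m, (if j ∈ S then (w j - F j ((k j : ℝ) - 1)) / Δ j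
              else (F j (k j) - w j) / Δ j))
      = (∏ ℓ ∈ Finset.univ.filter (fun ℓ => ℓ ∉ S ∧ ℓ ≠ m), (F ℓ (k ℓ) - w ℓ) / Δ ℓ)
        * (∏ ℓ ∈ S.filter (fun ℓ => ℓ ≠ m), (w ℓ - F ℓ ((k ℓ : ℝ) - 1)) / Δ ℓ) := by
    have e1 : (Finset.univ.erase m).filter (fun j => ¬ j ∈ S)
        = Finset.univ.filter (fun ℓ => ℓ ∉ S ∧ ℓ ≠ m) := by
      ext j; simp [Finset.mem_erase, and_comm]
    have e2 : (Finset.univ.erase m).filter (fun j => j ∈ S)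
        = S.filter (fun ℓ => ℓ ≠ m) := by
      ext j; simp [Finset.mem_erase, and_comm]
    rw [Finset.prod_ite, mul_comm, e1, e2]
  rw [hR]
  have hfac : (if m ∈ S then (b - F m ((k m : ℝ) - 1)) / Δ m else (F m (k m) - b) / Δ m)
      - (if m ∈ S then (a - F m ((k m : ℝ) - 1)) / Δ m else (F m (k m) - a) / Δ m)
      = (b - a) * ((-1 : ℝ) ^ ((1 : ℕ) - if m ∈ S then 1 else 0) / Δ m) := by
    by_cases h : m ∈ S <;> simp [h] <;> ring
  rw [hfac]
  ring

theorem cdot_indep (d : ℕ) (H : (Fin d → ℝ) → ℝ) (F : Fin d → ℝ → ℝ) (k : Fin d → ℕ)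
    (m : Fin d) (w w' : Fin d → ℝ) (h : ∀ j, j ≠ m → w j = w' j) :
    Cdot d H F k m w = Cdot d H F k m w' := by
  unfold Cdot
  refine Finset.sum_congr rfl fun S _ => ?_
  congr 1
  · congr 1
    refine Finset.prod_congr rfl fun j hj => ?_
    rw [h j (Finset.mem_filter.1 hj).2.2]
  · refine Finset.prod_congr rfl fun j hj => ?_
    rw [h j (Finset.mem_filter.1 hj).2]

theorem phi_telescope (d : ℕ) (H : (Fin d → ℝ) → ℝ) (F : Fin d → ℝ → ℝ) (k : Fin d → ℕ)
    (u v : Fin d → ℝ) :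
    Phi d H F k v - Phi d H F k u
      = ∑ m : Fin d, (v m - u m) * Cdot d H F k m (fun j => if j < m then u j else v j) := by
  set W : ℕ → Fin d → ℝ := fun m j => if (j : ℕ) < m then u j else v j with hW
  have h0 : W 0 = v := by funext j; simp [hW]
  have hdd : W d = u := by funext j; simp [hW, j.isLt]
  have htel : Phi d H F k v - Phi d H F k u
      = ∑ i ∈ Finset.range d, (Phi d H F k (W i) - Phi d H F k (W (i + 1))) := by
    rw [Finset.sum_range_sub' (fun i => Phi d H F k (W i)), h0, hdd]
  rw [htel, ← Fin.sum_univ_eq_sum_range (fun i => Phi d H F k (W i) - Phi d H F k (W (i + 1)))]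
  refine Finset.sum_congr rfl fun m _ => ?_
  set w : Fin d → ℝ := fun j => if j < m then u j else v j with hw
  have e1 : W (↑m) = Function.update w m (v m) := by
    funext j
    by_cases hj : j = m
    · subst hj; simp [hW, hw]
    · rw [Function.update_of_ne hj]
      simp only [hW, hw, Fin.lt_def]
  have e2 : W (↑m + 1) = Function.update w m (u m) := by
    funext j
    by_cases hj : j = m
    · subst hj; simp [hW, hw]
    · rw [Function.update_of_ne hj]
      have : (j : ℕ) < (m : ℕ) + 1 ↔ (j : ℕ) < (m : ℕ) := by
        constructor
        · intro h
          rcases Nat.lt_succ_iff_lt_or_eq.1 h with h | h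
          · exact h
          · exact absurd (Fin.ext h) hj
        · exact fun h => Nat.lt_succ_of_lt h
      simp only [hW, hw, Fin.lt_def, this]
  rw [e1, e2, phi_update]

/-- Lemma B.4: on an open cell of `[0,1]^d`, the increment of the
multilinear extension copula is the telescoping sum
`C^⊞(v) − C^⊞(u) = ∑_m (v_m − u_m) Ċ_m^⊞(w_{m1},…,w_{md})`, with `w_{mj} = u_j` for `j < m`
and `w_{mj} = v_j` for `j ≥ m`. -/
theorem mlinCopula_increment_formula
    {Ω : Type*} [MeasurableSpace Ω] (P : Measure Ω) [IsProbabilityMeasure P]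
    (d : ℕ) (hd : 1 ≤ d) (X : Ω → Fin d → ℝ) (hX : Measurable X)
    (hNat : ∀ ω j, ∃ k : ℕ, X ω j = k)
    (H : (Fin d → ℝ) → ℝ) (F : Fin d → ℝ → ℝ)
    (hH : ∀ x, H x = (P {ω | ∀ j, X ω j ≤ x j}).toReal)
    (hF : ∀ j x, F j x = (P {ω | X ω j ≤ x}).toReal)
    (k : Fin d → ℕ) (hjump : ∀ j, 0 < F j (k j) - F j ((k j : ℝ) - 1))
    (u v : Fin d → ℝ)
    (hu : ∀ j, u j ∈ Set.Ioo (F j ((k j : ℝ) - 1)) (F j (k j)))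
    (hv : ∀ j, v j ∈ Set.Ioo (F j ((k j : ℝ) - 1)) (F j (k j))) :
    mlinCopula d H F v - mlinCopula d H F u
      = ∑ m : Fin d, (v m - u m) * Cdot d H F k m (fun j => if j < m then u j else v j) := by
  classical
  set Δ : Fin d → ℝ := fun j => F j (k j) - F j ((k j : ℝ) - 1) with hΔdef
  have hΔ : ∀ j, 0 < Δ j := hjump
  have hlow : ∀ j y, (k j : ℝ) - 1 ≤ y → y < k j → F j y = F j ((k j : ℝ) - 1) := by
    intro j y h1 h2
    have := F_step P X hNat F hF j ((k j : ℤ) - 1) y (by push_cast; linarith)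
      (by push_cast; linarith)
    rw [this]
    norm_num
  have hhigh : ∀ j y, (k j : ℝ) ≤ y → y < (k j : ℝ) + 1 → F j y = F j (k j) := by
    intro j y h1 h2
    have := F_step P X hNat F hF j (k j : ℤ) y (by push_cast; linarith)
      (by push_cast; linarith)
    rw [this]
    norm_num
  have hHstep : ∀ (a : Fin d → ℤ) (y : Fin d → ℝ),
      (∀ j, (a j : ℝ) ≤ y j ∧ y j < a j + 1) → H y = H (fun j => (a j : ℝ)) := by
    intro a y hy
    rw [hH, hH]
    congr 2
    ext ω
    simp only [Set.mem_setOf_eq]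
    refine forall_congr' fun j => ?_
    obtain ⟨n, hn⟩ := hNat ω j
    rw [hn]
    exact nat_le_iff n (a j) (y j) (hy j).1 (hy j).2
  have hcop : ∀ w : Fin d → ℝ, (∀ j, w j ∈ Set.Ioo (F j ((k j : ℝ) - 1)) (F j (k j))) →
      mlinCopula d H F w = Phi d H F k w := by
    intro w hw
    have hx : ∀ j, genInv (mlin1 (F j)) (w j)
        = ((k j : ℝ) - 1) + (w j - F j ((k j : ℝ) - 1)) / Δ j := by
      intro j
      exact genInv_cell (F j) (F_mono P X F hF j) (k j)
        (fun y h1 h2 => hlow j y h1 h2) (fun y h1 h2 => hhigh j y h1 h2)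
        (F_nonneg P X F hF j _) (w j) (hw j)
    have hxcell : ∀ j, (k j : ℝ) - 1 < ((k j : ℝ) - 1) + (w j - F j ((k j : ℝ) - 1)) / Δ j
        ∧ ((k j : ℝ) - 1) + (w j - F j ((k j : ℝ) - 1)) / Δ j < k j := by
      intro j
      have h1 : 0 < (w j - F j ((k j : ℝ) - 1)) / Δ j :=
        div_pos (by linarith [(hw j).1]) (hΔ j)
      have h2 : (w j - F j ((k j : ℝ) - 1)) / Δ j < 1 :=
        (div_lt_one (hΔ j)).2 (by simp only [hΔdef]; linarith [(hw j).2])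
      constructor <;> linarith
    rw [mlinCopula]
    have hfun : (fun j => genInv (mlin1 (F j)) (w j))
        = fun j => ((k j : ℝ) - 1) + (w j - F j ((k j : ℝ) - 1)) / Δ j := funext hx
    rw [hfun, mlin_cell d H k hHstep _ hxcell]
    unfold Phi
    refine Finset.sum_congr rfl fun S _ => ?_
    congr 1
    refine Finset.prod_congr rfl fun j _ => ?_
    have hΔne : Δ j ≠ 0 := ne_of_gt (hΔ j)
    split_ifs
    · simp only [hΔdef]
      ring
    · have hΔne' : F j (k j) - F j ((k j : ℝ) - 1) ≠ 0 := hΔne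
      simp only [hΔdef]
      field_simp
      ring
  rw [hcop v hv, hcop u hu]
  exact phi_telescope d H F k u v
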